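/- Let X be an almost automorphic subshift with factor map π to its maximal equicontinuous factor and separating-cover boundary B_X. Suppose ω satisfies: the orbit {R^j ω : j ∈ ℤ} meets B_X in an infinite set, and the fiber π⁻¹(ω) is finite. Then there exist x, y ∈ π⁻¹(ω) with x ≠ y such that the set {j ∈ ℤ : x(j) ≠ y(j)} is infinite; in particular X contains a proximal pair of orbits that is not two-sided asymptotic. -/

import Mathlib

/-- If the orbit of ω meets the boundary in an infinite set while the fiber over ω is
finite, then two distinct elements of the fiber differ in infinitely many positions
(yielding a proximal pair of orbits that is not two-sided asymptotic). -/
theorem infinite_boundary_orbit_finite_fiber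
    {A : Type*} [Fintype A] {Ω : Type*} [AddCommGroup Ω]
    (X : Set (ℤ → A)) (π : (ℤ → A) → Ω) (g₀ : Ω) (B : Set Ω) (ω : Ω)
    (hfib : {x ∈ X | π x = ω}.Finite)
    (hchar : {j : ℤ | ω + j • g₀ ∈ B} =
      ⋃ x ∈ {x ∈ X | π x = ω}, ⋃ y ∈ {x ∈ X | π x = ω}, {j : ℤ | x j ≠ y j})
    (hinf : {j : ℤ | ω + j • g₀ ∈ B}.Infinite) :
    ∃ x ∈ X, ∃ y ∈ X, π x = ω ∧ π y = ω ∧ x ≠ y ∧ {j : ℤ | x j ≠ y j}.Infinite := by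
  rw [hchar] at hinf
  by_contra h
  push_neg at h
  apply hinf
  apply Set.Finite.biUnion hfib
  intro x hx
  apply Set.Finite.biUnion hfib
  intro y hy
  rcases eq_or_ne x y with rfl | hne
  · convert Set.finite_empty
    ext j; simp
  · by_contra hInf
    exact absurd (h x hx.1 y hy.1 hx.2 hy.2 hne) hInf
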